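/- In the extended-operator setup, if F : ℝ^n → ℝ^n is monotone (⟨F x − F y, x − y⟩ ≥ 0 for all x, y), then the operator Ā is monotone on ℝ^n × ℝ^{Nm} × ℝ^{Nm}_{≥0}: for all ω₁ = (x₁, z₁, λ₁) and ω₂ = (x₂, z₂, λ₂) with λ₁, λ₂ ∈ ℝ^{Nm}_{≥0}, ⟨Ā(ω₁) − Ā(ω₂), ω₁ − ω₂⟩ ≥ 0. -/

import Mathlib

open scoped RealInnerProductSpace

lemma convex_gradient_ineq {E : Type*} [NormedAddCommGroup E] [InnerProductSpace ℝ E]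
    [CompleteSpace E] {φ : E → ℝ} (hφ : ConvexOn ℝ Set.univ φ)
    (x y : E) (hd : DifferentiableAt ℝ φ x) :
    φ x + ⟪gradient φ x, y - x⟫ ≤ φ y := by
  set v := y - x with hv
  set ψ : ℝ → ℝ := fun t => φ (t • v + x) with hψ
  have hconv : ConvexOn ℝ Set.univ ψ := by
    have := hφ.comp_affineMap (AffineMap.lineMap x y)
    simp [hψ, Function.comp, AffineMap.lineMap_apply, hv] at this
    exact this
  have hc : HasDerivAt (fun t : ℝ => t • v + x) v 0 := by
    simpa using ((hasDerivAt_id (0:ℝ)).smul_const v).add_const x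
  have hder : HasDerivAt ψ ⟪gradient φ x, v⟫ 0 := by
    have hg := hd.hasGradientAt.hasFDerivAt
    have h0 : x = ((fun t : ℝ => t • v + x) 0) := by simp
    rw [h0] at hg
    have := hg.comp_hasDerivAt (0:ℝ) hc
    simp [InnerProductSpace.toDual_apply_apply] at this
    rw [show ⟪gradient φ x, v⟫ = fderiv ℝ φ x v by simp [gradient, InnerProductSpace.toDual_symm_apply]]
    exact this
  have := hconv.le_slope_of_hasDerivAt (Set.mem_univ 0) (Set.mem_univ 1) one_pos hder
  have hs : slope ψ 0 1 = φ y - φ x := by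
    simp [slope_def_field, hψ, hv]
  rw [hs] at this
  linarith

lemma lap_quad_nonneg {N : ℕ} {E : Type*} [NormedAddCommGroup E] [InnerProductSpace ℝ E]
    (W L : Matrix (Fin N) (Fin N) ℝ) (hWs : W.IsSymm) (hWnn : ∀ i j, 0 ≤ W i j)
    (hL : ∀ i j, L i j = (if i = j then ∑ k, W i k else 0) - W i j)
    (u : Fin N → E) : 0 ≤ ∑ i, ∑ k, L i k * ⟪u k, u i⟫ := by
  have hWsym : ∀ i j, W j i = W i j := fun i j => by
    conv_lhs => rw [← hWs]
    rfl
  have key : (2:ℝ) * ∑ i, ∑ k, L i k * ⟪u k, u i⟫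
      = ∑ i, ∑ k, W i k * ‖u i - u k‖^2 := by
    have hdiag : ∀ i : Fin N, ∑ k, (if i = k then (∑ l, W i l) else 0) * ⟪u k, u i⟫
        = ∑ l, W i l * ‖u i‖^2 := by
      intro i
      simp [ite_mul, real_inner_self_eq_norm_sq, Finset.sum_mul]
    have hswap : ∑ i, ∑ k, W i k * ‖u k‖^2 = ∑ i, ∑ k, W i k * ‖u i‖^2 := by
      rw [Finset.sum_comm]
      exact Finset.sum_congr rfl fun k _ => Finset.sum_congr rfl fun i _ => by
        rw [hWsym]
    have hexp : ∀ i k : Fin N, W i k * ‖u i - u k‖^2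
        = W i k * ‖u i‖^2 + W i k * ‖u k‖^2 - 2 * (W i k * ⟪u k, u i⟫) := by
      intro i k
      rw [norm_sub_sq_real, real_inner_comm]
      ring
    simp_rw [hL, sub_mul, Finset.sum_sub_distrib, hdiag, hexp]
    simp only [Finset.sum_sub_distrib, Finset.sum_add_distrib, hswap, ← Finset.mul_sum]
    ring
  have hnn : 0 ≤ ∑ i, ∑ k, W i k * ‖u i - u k‖^2 :=
    Finset.sum_nonneg fun i _ => Finset.sum_nonneg fun k _ =>
      mul_nonneg (hWnn i k) (by positivity)
  nlinarith [key]


/-- **Monotonicity of the extended operator `Ā`.** In the extended-operator setup, if the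
pseudogradient `F` is monotone, then `Ā` is monotone on `ℝ^n × ℝ^{Nm} × ℝ^{Nm}_{≥0}`:
the sum of the blockwise inner products `⟨Ā(ω₁) − Ā(ω₂), ω₁ − ω₂⟩` is nonnegative. -/
theorem stmt_3 {N m : ℕ} (n : Fin N → ℕ)
    (F : PiLp 2 (fun i : Fin N => EuclideanSpace ℝ (Fin (n i))) →
         PiLp 2 (fun i : Fin N => EuclideanSpace ℝ (Fin (n i))))
    (hFmono : ∀ x y : PiLp 2 (fun i : Fin N => EuclideanSpace ℝ (Fin (n i))),
      0 ≤ ⟪F x - F y, x - y⟫)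
    (g : ∀ i : Fin N, EuclideanSpace ℝ (Fin (n i)) → EuclideanSpace ℝ (Fin m))
    (hgsmooth : ∀ i, ContDiff ℝ 1 (g i))
    (hgconv : ∀ i (j : Fin m), ConvexOn ℝ Set.univ (fun y => g i y j))
    (W : Matrix (Fin N) (Fin N) ℝ) (hWsymm : W.IsSymm)
    (hWnonneg : ∀ i j, 0 ≤ W i j) (hWdiag : ∀ i, W i i = 0)
    (hconn : (SimpleGraph.fromRel (fun i j => W i j ≠ 0)).Connected)
    (L : Matrix (Fin N) (Fin N) ℝ)
    (hL : ∀ i j, L i j = (if i = j then ∑ k, W i k else 0) - W i j) :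
    ∀ (x₁ x₂ : PiLp 2 (fun i : Fin N => EuclideanSpace ℝ (Fin (n i))))
      (z₁ z₂ l₁ l₂ : PiLp 2 (fun _ : Fin N => EuclideanSpace ℝ (Fin m))),
      (∀ i j, 0 ≤ l₁ i j) → (∀ i j, 0 ≤ l₂ i j) →
      0 ≤ (∑ i, ⟪(F x₁ i + ∑ j, l₁ i j • gradient (fun y => g i y j) (x₁ i))
                  - (F x₂ i + ∑ j, l₂ i j • gradient (fun y => g i y j) (x₂ i)),
                 x₁ i - x₂ i⟫)
          + (∑ i, ⟪(∑ k, L i k • z₁ k) - (∑ k, L i k • z₂ k), z₁ i - z₂ i⟫)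
          + (∑ i, ⟪((∑ k, L i k • l₁ k) - g i (x₁ i) - (∑ k, L i k • z₁ k))
                    - ((∑ k, L i k • l₂ k) - g i (x₂ i) - (∑ k, L i k • z₂ k)),
                   l₁ i - l₂ i⟫) := by
  intro x₁ x₂ z₁ z₂ l₁ l₂ hl₁ hl₂
  -- abbreviations
  set δz : Fin N → EuclideanSpace ℝ (Fin m) := fun k => z₁ k - z₂ k with hδz
  set δl : Fin N → EuclideanSpace ℝ (Fin m) := fun k => l₁ k - l₂ k with hδl
  -- differentiability of components of g
  have hdiff : ∀ i (j : Fin m) (x : EuclideanSpace ℝ (Fin (n i))),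
      DifferentiableAt ℝ (fun y => g i y j) x := by
    intro i j x
    have h1 : DifferentiableAt ℝ (g i) x := ((hgsmooth i).differentiable one_ne_zero) x
    exact ((EuclideanSpace.proj j).differentiableAt).comp x h1
  -- gradient inequalities
  have hineq1 : ∀ i (j : Fin m),
      g i (x₁ i) j - g i (x₂ i) j ≤ ⟪gradient (fun y => g i y j) (x₁ i), x₁ i - x₂ i⟫ := by
    intro i j
    have := convex_gradient_ineq (hgconv i j) (x₁ i) (x₂ i) (hdiff i j (x₁ i))
    have h2 : ⟪gradient (fun y => g i y j) (x₁ i), x₂ i - x₁ i⟫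
        = - ⟪gradient (fun y => g i y j) (x₁ i), x₁ i - x₂ i⟫ := by
      rw [← inner_neg_right, neg_sub]
    rw [h2] at this
    linarith
  have hineq2 : ∀ i (j : Fin m),
      ⟪gradient (fun y => g i y j) (x₂ i), x₁ i - x₂ i⟫ ≤ g i (x₁ i) j - g i (x₂ i) j := by
    intro i j
    have := convex_gradient_ineq (hgconv i j) (x₂ i) (x₁ i) (hdiff i j (x₂ i))
    linarith
  -- rewrite the first block sum
  have hx : (∑ i, ⟪(F x₁ i + ∑ j, l₁ i j • gradient (fun y => g i y j) (x₁ i))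
                  - (F x₂ i + ∑ j, l₂ i j • gradient (fun y => g i y j) (x₂ i)),
                 x₁ i - x₂ i⟫)
      = (∑ i, ⟪F x₁ i - F x₂ i, x₁ i - x₂ i⟫)
        + ∑ i, ∑ j, (l₁ i j * ⟪gradient (fun y => g i y j) (x₁ i), x₁ i - x₂ i⟫
                     - l₂ i j * ⟪gradient (fun y => g i y j) (x₂ i), x₁ i - x₂ i⟫) := by
    rw [← Finset.sum_add_distrib]
    refine Finset.sum_congr rfl fun i _ => ?_
    rw [show (F x₁ i + ∑ j, l₁ i j • gradient (fun y => g i y j) (x₁ i))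
          - (F x₂ i + ∑ j, l₂ i j • gradient (fun y => g i y j) (x₂ i))
        = (F x₁ i - F x₂ i) + ((∑ j, l₁ i j • gradient (fun y => g i y j) (x₁ i))
          - (∑ j, l₂ i j • gradient (fun y => g i y j) (x₂ i))) from by abel]
    simp only [inner_add_left, inner_sub_left, sum_inner, real_inner_smul_left,
      Finset.sum_sub_distrib]
  -- rewrite the second block sum
  have hz : (∑ i, ⟪(∑ k, L i k • z₁ k) - (∑ k, L i k • z₂ k), z₁ i - z₂ i⟫)
      = ∑ i, ∑ k, L i k * ⟪δz k, δz i⟫ := by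
    refine Finset.sum_congr rfl fun i _ => ?_
    rw [← Finset.sum_sub_distrib]
    simp_rw [← smul_sub]
    rw [sum_inner]
    simp_rw [real_inner_smul_left]
    rfl
  -- rewrite the third block sum
  have hlam : (∑ i, ⟪((∑ k, L i k • l₁ k) - g i (x₁ i) - (∑ k, L i k • z₁ k))
                    - ((∑ k, L i k • l₂ k) - g i (x₂ i) - (∑ k, L i k • z₂ k)),
                   l₁ i - l₂ i⟫)
      = (∑ i, ∑ k, L i k * ⟪δl k, δl i⟫) - (∑ i, ∑ k, L i k * ⟪δz k, δl i⟫)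
        - ∑ i, ⟪g i (x₁ i) - g i (x₂ i), l₁ i - l₂ i⟫ := by
    rw [← Finset.sum_sub_distrib, ← Finset.sum_sub_distrib]
    refine Finset.sum_congr rfl fun i _ => ?_
    rw [show ((∑ k, L i k • l₁ k) - g i (x₁ i) - (∑ k, L i k • z₁ k))
          - ((∑ k, L i k • l₂ k) - g i (x₂ i) - (∑ k, L i k • z₂ k))
        = ((∑ k, L i k • l₁ k) - (∑ k, L i k • l₂ k))
          - ((∑ k, L i k • z₁ k) - (∑ k, L i k • z₂ k))
          - (g i (x₁ i) - g i (x₂ i)) from by abel]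
    rw [inner_sub_left, inner_sub_left]
    congr 1
    congr 1
    · rw [← Finset.sum_sub_distrib]
      simp_rw [← smul_sub]
      rw [sum_inner]
      simp_rw [real_inner_smul_left]
      rfl
    · rw [← Finset.sum_sub_distrib]
      simp_rw [← smul_sub]
      rw [sum_inner]
      simp_rw [real_inner_smul_left]
      rfl
  rw [hx, hz, hlam]
  -- the g-inner-product sums in coordinates
  have hgcoord : ∀ i, ⟪g i (x₁ i) - g i (x₂ i), l₁ i - l₂ i⟫
      = ∑ j, (g i (x₁ i) j - g i (x₂ i) j) * (l₁ i j - l₂ i j) := by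
    intro i
    rw [PiLp.inner_apply]
    refine Finset.sum_congr rfl fun j _ => ?_
    simp [PiLp.sub_apply, RCLike.inner_apply]
    ring
  simp_rw [hgcoord]
  -- nonnegativity of the F part
  have hF : 0 ≤ ∑ i, ⟪F x₁ i - F x₂ i, x₁ i - x₂ i⟫ := by
    have := hFmono x₁ x₂
    rw [PiLp.inner_apply] at this
    simpa [PiLp.sub_apply] using this
  -- nonnegativity of the convexity part
  have hconvpart : 0 ≤ (∑ i, ∑ j, (l₁ i j * ⟪gradient (fun y => g i y j) (x₁ i), x₁ i - x₂ i⟫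
                     - l₂ i j * ⟪gradient (fun y => g i y j) (x₂ i), x₁ i - x₂ i⟫))
      - ∑ i, ∑ j, (g i (x₁ i) j - g i (x₂ i) j) * (l₁ i j - l₂ i j) := by
    rw [← Finset.sum_sub_distrib]
    refine Finset.sum_nonneg fun i _ => ?_
    rw [← Finset.sum_sub_distrib]
    refine Finset.sum_nonneg fun j _ => ?_
    have h1 := hineq1 i j
    have h2 := hineq2 i j
    have h3 := hl₁ i j
    have h4 := hl₂ i j
    nlinarith
  -- nonnegativity of the Laplacian part
  have hq1 : 0 ≤ ∑ i, ∑ k, L i k * ⟪δz k, δz i⟫ :=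
    lap_quad_nonneg W L hWsymm hWnonneg hL δz
  have hq2 : 0 ≤ ∑ i, ∑ k, L i k * ⟪δl k, δl i⟫ :=
    lap_quad_nonneg W L hWsymm hWnonneg hL δl
  have hq3 : 0 ≤ ∑ i, ∑ k, L i k * ⟪(δz - δl) k, (δz - δl) i⟫ :=
    lap_quad_nonneg W L hWsymm hWnonneg hL (δz - δl)
  -- symmetry of L
  have hLsymm : ∀ i k, L i k = L k i := by
    intro i k
    rw [hL, hL]
    by_cases h : i = k
    · subst h; simp
    · have h' : ¬ k = i := fun hc => h hc.symm
      have hw : W k i = W i k := by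
        conv_lhs => rw [← hWsymm]
        rfl
      simp [h, h', hw]
  have hBsymm : (∑ i, ∑ k, L i k * ⟪δl k, δz i⟫) = ∑ i, ∑ k, L i k * ⟪δz k, δl i⟫ := by
    rw [Finset.sum_comm]
    refine Finset.sum_congr rfl fun k _ => Finset.sum_congr rfl fun i _ => ?_
    rw [hLsymm k i, real_inner_comm]
  have hexp : (∑ i, ∑ k, L i k * ⟪(δz - δl) k, (δz - δl) i⟫)
      = (∑ i, ∑ k, L i k * ⟪δz k, δz i⟫) - (∑ i, ∑ k, L i k * ⟪δz k, δl i⟫)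
        - (∑ i, ∑ k, L i k * ⟪δl k, δz i⟫) + (∑ i, ∑ k, L i k * ⟪δl k, δl i⟫) := by
    simp_rw [Pi.sub_apply, inner_sub_left, inner_sub_right, mul_sub,
      Finset.sum_sub_distrib]
    ring
  rw [hexp, hBsymm] at hq3
  linarith
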